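/- Let X be a real normed space and suppose that every countable set A ⊆ S_X satisfies: for every ε > 0 there is y ∈ S_X with ‖x + y‖ ≥ 2 − ε for all x ∈ A (i.e., X is ω-octahedral in the sequential sense). Then for every separable subspace Y ⊆ X and every ε > 0 there exists x ∈ S_X such that ‖y + λx‖ ≥ (1 − ε)(‖y‖ + |λ|) for all y ∈ Y and λ ∈ ℝ. -/

import Mathlib

lemma key_19 {X : Type*} [NormedAddCommGroup X] [NormedSpace ℝ X] {ε : ℝ}
    (hε1 : ε < 1) {u x : X} (hu : ‖u‖ = 1) (hx : ‖x‖ = 1) (h1 : ‖u + x‖ ≥ 2 - ε) :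
    ∀ s ≥ (0:ℝ), ∀ t ≥ (0:ℝ), ‖s • u + t • x‖ ≥ (1 - ε) * (s + t) := by
  intro s hs t ht
  have hne : u + x ≠ 0 := by
    intro h0
    rw [h0, norm_zero] at h1
    linarith
  obtain ⟨f, hf, hfe⟩ := exists_dual_vector ℝ (u + x) (norm_ne_zero_iff.mpr hne)
  have hsum : f u + f x = ‖u + x‖ := by rw [← map_add]; exact_mod_cast hfe
  have hfu : f u ≥ 1 - ε := by
    have hxb : f x ≤ 1 := by
      have := f.le_opNorm x
      rw [hf, hx] at this
      exact (le_abs_self _).trans (by simpa using this)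
    linarith
  have hfx : f x ≥ 1 - ε := by
    have hub : f u ≤ 1 := by
      have := f.le_opNorm u
      rw [hf, hu] at this
      exact (le_abs_self _).trans (by simpa using this)
    linarith
  have hle : f (s • u + t • x) ≤ ‖s • u + t • x‖ := by
    have := f.le_opNorm (s • u + t • x)
    rw [hf] at this
    exact (le_abs_self _).trans (by simpa using this)
  have heq : f (s • u + t • x) = s * f u + t * f x := by simp
  have h1ε : (0:ℝ) ≤ 1 - ε := by linarith
  nlinarith [mul_le_mul_of_nonneg_left hfu hs, mul_le_mul_of_nonneg_left hfx ht]

theorem stmt_19 {X : Type*} [NormedAddCommGroup X] [NormedSpace ℝ X]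
    (h : ∀ A : Set X, A.Countable → (∀ x ∈ A, ‖x‖ = 1) →
      ∀ ε > (0 : ℝ), ∃ y : X, ‖y‖ = 1 ∧ ∀ x ∈ A, ‖x + y‖ ≥ 2 - ε) :
    ∀ Y : Submodule ℝ X, TopologicalSpace.IsSeparable (Y : Set X) →
      ∀ ε > (0 : ℝ), ∃ x : X, ‖x‖ = 1 ∧
        ∀ y ∈ Y, ∀ lam : ℝ, ‖y + lam • x‖ ≥ (1 - ε) * (‖y‖ + |lam|) := by
  intro Y hY ε hε
  by_cases hε1 : 1 ≤ ε
  · obtain ⟨x, hx, -⟩ := h ∅ Set.countable_empty (by simp) 1 one_pos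
    refine ⟨x, hx, fun y _ lam => ?_⟩
    have h1 : (1 - ε) * (‖y‖ + |lam|) ≤ 0 :=
      mul_nonpos_of_nonpos_of_nonneg (by linarith)
        (by positivity)
    exact le_trans h1 (norm_nonneg _)
  push_neg at hε1
  obtain ⟨c, hc_count, hc_sub⟩ := hY
  set A : Set X := (fun a : X => ‖a‖⁻¹ • a) '' (c \ {0}) ∪
      (fun a : X => -(‖a‖⁻¹ • a)) '' (c \ {0}) with hA_def
  have hnorm : ∀ a : X, a ≠ 0 → ‖‖a‖⁻¹ • a‖ = 1 := by
    intro a ha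
    rw [norm_smul, norm_inv, norm_norm]
    field_simp [norm_ne_zero_iff.mpr ha]
  have hA_count : A.Countable :=
    ((hc_count.mono Set.diff_subset).image _).union
      ((hc_count.mono Set.diff_subset).image _)
  have hA_unit : ∀ z ∈ A, ‖z‖ = 1 := by
    rintro z (⟨a, ⟨_, ha0⟩, rfl⟩ | ⟨a, ⟨_, ha0⟩, rfl⟩)
    · exact hnorm a (by simpa using ha0)
    · rw [norm_neg]; exact hnorm a (by simpa using ha0)
  obtain ⟨x, hx, hA⟩ := h A hA_count hA_unit ε hε
  refine ⟨x, hx, ?_⟩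
  set S : Set X := {y : X | ∀ lam : ℝ, (1 - ε) * (‖y‖ + |lam|) ≤ ‖y + lam • x‖}
    with hS_def
  have hS_closed : IsClosed S := by
    have : S = ⋂ lam : ℝ, {y : X | (1 - ε) * (‖y‖ + |lam|) ≤ ‖y + lam • x‖} := by
      ext y; simp [hS_def]
    rw [this]
    refine isClosed_iInter fun lam => isClosed_le ?_ ?_
    · fun_prop
    · fun_prop
  have hcS : c ⊆ S := by
    intro a ha lam
    by_cases ha0 : a = 0
    · subst ha0
      simp only [norm_zero, zero_add, norm_smul, hx, Real.norm_eq_abs, mul_one]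
      nlinarith [abs_nonneg lam]
    · set u : X := ‖a‖⁻¹ • a with hu_def
      have hsmul : ‖a‖ • u = a := by
        rw [hu_def, smul_smul, mul_inv_cancel₀ (norm_ne_zero_iff.mpr ha0), one_smul]
      have hmemA : a ∈ c \ {0} := ⟨ha, by simpa using ha0⟩
      have hu : ‖u‖ = 1 := hnorm a ha0
      have h1 : ‖u + x‖ ≥ 2 - ε := hA u (Or.inl ⟨a, hmemA, rfl⟩)
      have h2 : ‖-u + x‖ ≥ 2 - ε := hA (-u) (Or.inr ⟨a, hmemA, rfl⟩)
      rcases le_or_gt 0 lam with hlam | hlam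
      · have := key_19 hε1 hu hx h1 ‖a‖ (norm_nonneg a) lam hlam
        rw [hsmul] at this
        rwa [abs_of_nonneg hlam]
      · have := key_19 hε1 (by rw [norm_neg]; exact hu) hx h2 ‖a‖ (norm_nonneg a) (-lam) (by linarith)
        have heq : ‖a‖ • (-u) + (-lam) • x = -(a + lam • x) := by
          rw [smul_neg, hsmul, neg_smul, ← neg_add]
        rw [heq, norm_neg] at this
        rwa [abs_of_neg hlam]
  intro y hy lam
  have : y ∈ S := hS_closed.closure_subset_iff.mpr hcS (hc_sub hy)
  exact this lam
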